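/- For every natural number l, pointwise in p, q > 0 one has k_j^B(p,q) ≤ (1/π) Q_{j-1/2}((p/q + q/p)/2) where k_j^B(p,q) = (1/(2π))[Q_{j-1/2}((p/q+q/p)/2) + Q_{j+1/2}((p/q+q/p)/2)], and consequently the critical constants satisfy κ_j^B ≥ κ_{j-1/2}^C, where 1/κ_j^B = ∫_0^∞ k_j^B((t+1/t)/2) dt/t and 1/κ_l^C = (1/π)∫_0^∞ Q_l((t+1/t)/2) dt/t. -/

import Mathlib

open MeasureTheory

/-- The Legendre polynomials, via Bonnet's recursion. -/
noncomputable def legendreP : ℕ → ℝ → ℝ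
  | 0, _ => 1
  | 1, t => t
  | (n + 2), t =>
      ((2 * (n : ℝ) + 3) * t * legendreP (n + 1) t - ((n : ℝ) + 1) * legendreP n t) /
        ((n : ℝ) + 2)

lemma legendreP_zero (t : ℝ) : legendreP 0 t = 1 := rfl
lemma legendreP_one (t : ℝ) : legendreP 1 t = t := rfl
lemma legendreP_add_two (n : ℕ) (t : ℝ) :
    legendreP (n + 2) t =
      ((2 * (n : ℝ) + 3) * t * legendreP (n + 1) t - ((n : ℝ) + 1) * legendreP n t) /
        ((n : ℝ) + 2) := rfl

lemma legendreP_continuous : ∀ n, Continuous (legendreP n)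
  | 0 => continuous_const
  | 1 => continuous_id
  | (n + 2) => by
      have h1 := legendreP_continuous (n + 1)
      have h0 := legendreP_continuous n
      have h : legendreP (n + 2) = fun t =>
          ((2 * (n : ℝ) + 3) * t * legendreP (n + 1) t - ((n : ℝ) + 1) * legendreP n t) /
            ((n : ℝ) + 2) := rfl
      rw [h]
      fun_prop

/-- Derivative of the Legendre polynomials. -/
noncomputable def legendreD : ℕ → ℝ → ℝ
  | 0, _ => 0
  | (n + 1), t => ((n : ℝ) + 1) * legendreP n t + t * legendreD n t

lemma legendreD_succ (n : ℕ) (t : ℝ) :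
    legendreD (n + 1) t = ((n : ℝ) + 1) * legendreP n t + t * legendreD n t := rfl

/-- `(t² - 1) Pₙ' = (n+1)(P_{n+1} - t Pₙ)`. -/
lemma legendre_pell : ∀ (n : ℕ) (t : ℝ),
    (t ^ 2 - 1) * legendreD n t = ((n : ℝ) + 1) * (legendreP (n + 1) t - t * legendreP n t)
  | 0, t => by simp [legendreD, legendreP_one, legendreP_zero]
  | (n + 1), t => by
      have ih := legendre_pell n t
      have hne : ((n : ℝ) + 2) ≠ 0 := by positivity
      rw [legendreD_succ, legendreP_add_two]
      push_cast
      field_simp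
      linear_combination ((n : ℝ) + 2) * t * ih

lemma legendre_key (n : ℕ) (t : ℝ) :
    t * legendreD (n + 1) t - legendreD n t = ((n : ℝ) + 1) * legendreP (n + 1) t := by
  have hp := legendre_pell n t
  rw [legendreD_succ]
  nlinarith [hp]

lemma legendre_hasDerivAt : ∀ (n : ℕ) (t : ℝ), HasDerivAt (legendreP n) (legendreD n t) t
  | 0, t => by
      exact hasDerivAt_const t (1 : ℝ)
  | 1, t => by
      have h : legendreD 1 t = 1 := by simp [legendreD_succ, legendreD, legendreP_zero]
      rw [show legendreP 1 = fun t : ℝ => t from rfl, h]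
      exact hasDerivAt_id t
  | (n + 2), t => by
      have h1 := legendre_hasDerivAt (n + 1) t
      have h0 := legendre_hasDerivAt n t
      have hrec : legendreP (n + 2) = fun t =>
          ((2 * (n : ℝ) + 3) * t * legendreP (n + 1) t - ((n : ℝ) + 1) * legendreP n t) /
            ((n : ℝ) + 2) := rfl
      rw [hrec]
      have hd : HasDerivAt (fun t : ℝ =>
          ((2 * (n : ℝ) + 3) * t * legendreP (n + 1) t - ((n : ℝ) + 1) * legendreP n t) /
            ((n : ℝ) + 2))
          ((((2 * (n : ℝ) + 3) * 1 * legendreP (n + 1) t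
              + (2 * (n : ℝ) + 3) * t * legendreD (n + 1) t)
            - ((n : ℝ) + 1) * legendreD n t) / ((n : ℝ) + 2)) t := by
        have ha : HasDerivAt (fun t : ℝ => (2 * (n : ℝ) + 3) * t)
            ((2 * (n : ℝ) + 3) * 1) t := (hasDerivAt_id t).const_mul _
        exact ((ha.mul h1).sub (h0.const_mul _)).div_const _
      convert hd using 1
      have hne : ((n : ℝ) + 2) ≠ 0 := by positivity
      have key := legendre_key n t
      have hD2 : legendreD (n + 2) t =
          (((n + 1 : ℕ) : ℝ) + 1) * legendreP (n + 1) t + t * legendreD (n + 1) t := rfl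
      push_cast at key hD2
      rw [hD2, eq_div_iff hne]
      linear_combination (-(n : ℝ) - 1) * key

lemma legendreP_at_one : ∀ n, legendreP n 1 = 1
  | 0 => rfl
  | 1 => rfl
  | (n + 2) => by
      have h1 := legendreP_at_one (n + 1)
      have h0 := legendreP_at_one n
      rw [legendreP_add_two, h1, h0]
      have hne : ((n : ℝ) + 2) ≠ 0 := by positivity
      field_simp
      ring

lemma legendreP_at_neg_one : ∀ n, legendreP n (-1) = (-1) ^ n
  | 0 => rfl
  | 1 => by simp [legendreP_one]
  | (n + 2) => by
      have h1 := legendreP_at_neg_one (n + 1)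
      have h0 := legendreP_at_neg_one n
      rw [legendreP_add_two, h1, h0]
      have hne : ((n : ℝ) + 2) ≠ 0 := by positivity
      rw [pow_succ, pow_succ]
      field_simp
      ring

lemma legendreD_diff (n : ℕ) (t : ℝ) :
    legendreD (n + 2) t - legendreD n t = (2 * (n : ℝ) + 3) * legendreP (n + 1) t := by
  have key := legendre_key n t
  have hD2 : legendreD (n + 2) t =
      (((n + 1 : ℕ) : ℝ) + 1) * legendreP (n + 1) t + t * legendreD (n + 1) t := rfl
  push_cast at hD2
  rw [hD2]
  linear_combination key

/-- `∫_{-1}^1 Pₙ = 0` for `n ≥ 1`. -/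
lemma legendreP_integral_zero (n : ℕ) :
    ∫ t in (-1 : ℝ)..1, legendreP (n + 1) t = 0 := by
  have hW : ∀ t ∈ Set.uIcc (-1 : ℝ) 1, HasDerivAt
      (fun t => (legendreP (n + 2) t - legendreP n t) / (2 * (n : ℝ) + 3))
      (legendreP (n + 1) t) t := by
    intro t _
    have h := ((legendre_hasDerivAt (n + 2) t).sub (legendre_hasDerivAt n t)).div_const
      (2 * (n : ℝ) + 3)
    have hne : (2 * (n : ℝ) + 3) ≠ 0 := by positivity
    rw [legendreD_diff] at h
    refine h.congr_deriv ?_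
    field_simp
  have hint : IntervalIntegrable (legendreP (n + 1)) volume (-1) 1 :=
    (legendreP_continuous (n + 1)).intervalIntegrable _ _
  rw [intervalIntegral.integral_eq_sub_of_hasDerivAt hW hint]
  rw [legendreP_at_one, legendreP_at_one, legendreP_at_neg_one, legendreP_at_neg_one]
  rw [pow_succ, pow_succ]
  ring

/-- The Legendre function of the second kind, via Neumann's integral. -/
noncomputable def legendreQ (l : ℕ) (z : ℝ) : ℝ :=
  (1 / 2) * ∫ t in (-1 : ℝ)..1, legendreP l t / (z - t)

lemma sub_ne_zero_of_gt_one {z t : ℝ} (hz : 1 < z) (ht : t ∈ Set.uIcc (-1 : ℝ) 1) :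
    z - t ≠ 0 := by
  rw [Set.uIcc_of_le (by norm_num : (-1 : ℝ) ≤ 1)] at ht
  have : t ≤ 1 := ht.2
  nlinarith

lemma legendreQ_integrand_intervalIntegrable (l : ℕ) {z : ℝ} (hz : 1 < z) :
    IntervalIntegrable (fun t => legendreP l t / (z - t)) volume (-1) 1 := by
  apply ContinuousOn.intervalIntegrable
  apply ContinuousOn.div
  · exact (legendreP_continuous l).continuousOn
  · fun_prop
  · intro t ht
    exact sub_ne_zero_of_gt_one hz ht

/-- Bonnet-type recurrence for `legendreQ`. -/
lemma legendreQ_rec (n : ℕ) {z : ℝ} (hz : 1 < z) :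
    ((n : ℝ) + 2) * legendreQ (n + 2) z =
      (2 * (n : ℝ) + 3) * z * legendreQ (n + 1) z - ((n : ℝ) + 1) * legendreQ n z := by
  have h2 := legendreQ_integrand_intervalIntegrable (n + 2) hz
  have h1 := legendreQ_integrand_intervalIntegrable (n + 1) hz
  have h0 := legendreQ_integrand_intervalIntegrable n hz
  have h1' : IntervalIntegrable (legendreP (n + 1)) volume (-1) 1 :=
    (legendreP_continuous (n + 1)).intervalIntegrable _ _
  have key : ∀ t ∈ Set.uIcc (-1 : ℝ) 1,
      ((n : ℝ) + 2) * (legendreP (n + 2) t / (z - t)) =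
        (2 * (n : ℝ) + 3) * z * (legendreP (n + 1) t / (z - t))
          - (2 * (n : ℝ) + 3) * legendreP (n + 1) t
          - ((n : ℝ) + 1) * (legendreP n t / (z - t)) := by
    intro t ht
    have hzt := sub_ne_zero_of_gt_one hz ht
    have hne : ((n : ℝ) + 2) ≠ 0 := by positivity
    rw [legendreP_add_two]
    field_simp
    ring
  have lhs : ((n : ℝ) + 2) * legendreQ (n + 2) z =
      (1 / 2) * ∫ t in (-1 : ℝ)..1, ((n : ℝ) + 2) * (legendreP (n + 2) t / (z - t)) := by
    rw [legendreQ, intervalIntegral.integral_const_mul]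
    ring
  rw [lhs, intervalIntegral.integral_congr key]
  have split : ∫ t in (-1 : ℝ)..1,
      ((2 * (n : ℝ) + 3) * z * (legendreP (n + 1) t / (z - t))
        - (2 * (n : ℝ) + 3) * legendreP (n + 1) t
        - ((n : ℝ) + 1) * (legendreP n t / (z - t)))
      = (2 * (n : ℝ) + 3) * z * (∫ t in (-1 : ℝ)..1, legendreP (n + 1) t / (z - t))
        - (2 * (n : ℝ) + 3) * (∫ t in (-1 : ℝ)..1, legendreP (n + 1) t)
        - ((n : ℝ) + 1) * (∫ t in (-1 : ℝ)..1, legendreP n t / (z - t)) := by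
    rw [intervalIntegral.integral_sub ((h1.const_mul _).sub (h1'.const_mul _)) (h0.const_mul _),
      intervalIntegral.integral_sub (h1.const_mul _) (h1'.const_mul _),
      intervalIntegral.integral_const_mul, intervalIntegral.integral_const_mul,
      intervalIntegral.integral_const_mul]
  rw [split, legendreP_integral_zero n, legendreQ, legendreQ]
  ring

/-- The positive integral representation. -/
noncomputable def legendreI (l : ℕ) (z : ℝ) : ℝ :=
  ∫ t in (-1 : ℝ)..1, (1 - t ^ 2) ^ l * ((z - t)⁻¹) ^ (l + 1)

lemma legendreI_integrand_intervalIntegrable (l k : ℕ) {z : ℝ} (hz : 1 < z) :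
    IntervalIntegrable (fun t : ℝ => (1 - t ^ 2) ^ l * ((z - t)⁻¹) ^ k) volume (-1) 1 := by
  apply ContinuousOn.intervalIntegrable
  apply ContinuousOn.mul
  · fun_prop
  · apply ContinuousOn.pow
    apply ContinuousOn.inv₀
    · fun_prop
    · intro t ht
      exact sub_ne_zero_of_gt_one hz ht

/-- Recurrence for `legendreI`. -/
lemma legendreI_rec (l : ℕ) {z : ℝ} (hz : 1 < z) :
    ((l : ℝ) + 2) * legendreI (l + 2) z =
      2 * (2 * (l : ℝ) + 3) * z * legendreI (l + 1) z - 4 * ((l : ℝ) + 1) * legendreI l z := by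
  set F : ℝ → ℝ := fun t => (1 - t ^ 2) ^ (l + 1) *
    ((2 * z * t + 1 - 3 * z ^ 2) * ((z - t)⁻¹) ^ (l + 2) + (3 * z - t) * ((z - t)⁻¹) ^ (l + 1))
    with hF
  set g : ℝ → ℝ := fun t =>
    ((l : ℝ) + 2) * ((1 - t ^ 2) ^ (l + 2) * ((z - t)⁻¹) ^ (l + 3))
      - 2 * (2 * (l : ℝ) + 3) * z * ((1 - t ^ 2) ^ (l + 1) * ((z - t)⁻¹) ^ (l + 2))
      + 4 * ((l : ℝ) + 1) * ((1 - t ^ 2) ^ l * ((z - t)⁻¹) ^ (l + 1)) with hg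
  have hderiv : ∀ t ∈ Set.uIcc (-1 : ℝ) 1, HasDerivAt F (g t) t := by
    intro t ht
    have hzt : z - t ≠ 0 := sub_ne_zero_of_gt_one hz ht
    have hu : HasDerivAt (fun t : ℝ => 1 - t ^ 2) (-(2 * t)) t := by
      simpa using ((hasDerivAt_pow 2 t).const_sub 1)
    have hup : HasDerivAt (fun t : ℝ => (1 - t ^ 2) ^ (l + 1))
        ((↑(l + 1) : ℝ) * (1 - t ^ 2) ^ l * (-(2 * t))) t := by
      simpa using hu.fun_pow (l + 1)
    have hw : HasDerivAt (fun t : ℝ => (z - t)⁻¹) (((z - t)⁻¹) ^ 2) t := by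
      have hv : HasDerivAt (fun t : ℝ => z - t) (-1) t := by
        simpa using (hasDerivAt_id t).const_sub z
      have := hv.inv hzt
      refine this.congr_deriv ?_
      field_simp
    have hw2 : HasDerivAt (fun t : ℝ => ((z - t)⁻¹) ^ (l + 2))
        ((↑(l + 2) : ℝ) * ((z - t)⁻¹) ^ (l + 1) * (((z - t)⁻¹) ^ 2)) t := by
      simpa using hw.fun_pow (l + 2)
    have hw1 : HasDerivAt (fun t : ℝ => ((z - t)⁻¹) ^ (l + 1))
        ((↑(l + 1) : ℝ) * ((z - t)⁻¹) ^ l * (((z - t)⁻¹) ^ 2)) t := by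
      simpa using hw.fun_pow (l + 1)
    have ha : HasDerivAt (fun t : ℝ => 2 * z * t + 1 - 3 * z ^ 2) (2 * z) t := by
      simpa using (((hasDerivAt_id t).const_mul (2 * z)).add_const 1).sub_const (3 * z ^ 2)
    have hb : HasDerivAt (fun t : ℝ => 3 * z - t) (-1) t := by
      simpa using (hasDerivAt_id t).const_sub (3 * z)
    have hin : HasDerivAt (fun t : ℝ =>
        (2 * z * t + 1 - 3 * z ^ 2) * ((z - t)⁻¹) ^ (l + 2) + (3 * z - t) * ((z - t)⁻¹) ^ (l + 1))
        ((2 * z) * ((z - t)⁻¹) ^ (l + 2)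
          + (2 * z * t + 1 - 3 * z ^ 2) * ((↑(l + 2) : ℝ) * ((z - t)⁻¹) ^ (l + 1) * (((z - t)⁻¹) ^ 2))
          + ((-1) * ((z - t)⁻¹) ^ (l + 1)
            + (3 * z - t) * ((↑(l + 1) : ℝ) * ((z - t)⁻¹) ^ l * (((z - t)⁻¹) ^ 2)))) t :=
      (ha.mul hw2).add (hb.mul hw1)
    have hFd := hup.mul hin
    refine hFd.congr_deriv ?_
    rw [hg]
    push_cast
    simp only [inv_pow]
    field_simp
    ring
  have hgi : IntervalIntegrable g volume (-1) 1 := by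
    apply IntervalIntegrable.add
    apply IntervalIntegrable.sub
    · exact (legendreI_integrand_intervalIntegrable (l + 2) (l + 3) hz).const_mul _
    · exact (legendreI_integrand_intervalIntegrable (l + 1) (l + 2) hz).const_mul _
    · exact (legendreI_integrand_intervalIntegrable l (l + 1) hz).const_mul _
  have hint : ∫ t in (-1 : ℝ)..1, g t = F 1 - F (-1) :=
    intervalIntegral.integral_eq_sub_of_hasDerivAt hderiv hgi
  have hF1 : F 1 = 0 := by simp [hF]
  have hFm1 : F (-1) = 0 := by
    rw [hF]
    norm_num
  rw [hF1, hFm1, sub_zero] at hint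
  have split : ∫ t in (-1 : ℝ)..1, g t =
      ((l : ℝ) + 2) * legendreI (l + 2) z
        - 2 * (2 * (l : ℝ) + 3) * z * legendreI (l + 1) z
        + 4 * ((l : ℝ) + 1) * legendreI l z := by
    rw [hg]
    rw [intervalIntegral.integral_add
        (((legendreI_integrand_intervalIntegrable (l + 2) (l + 3) hz).const_mul _).sub
          ((legendreI_integrand_intervalIntegrable (l + 1) (l + 2) hz).const_mul _))
        ((legendreI_integrand_intervalIntegrable l (l + 1) hz).const_mul _),
      intervalIntegral.integral_sub
        ((legendreI_integrand_intervalIntegrable (l + 2) (l + 3) hz).const_mul _)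
        ((legendreI_integrand_intervalIntegrable (l + 1) (l + 2) hz).const_mul _),
      intervalIntegral.integral_const_mul, intervalIntegral.integral_const_mul,
      intervalIntegral.integral_const_mul]
    rfl
  rw [split] at hint
  linarith

lemma legendreQ_eq_legendreI : ∀ (l : ℕ) {z : ℝ}, 1 < z →
    legendreQ l z = (1 / 2) ^ (l + 1) * legendreI l z
  | 0, z, hz => by
      rw [legendreQ, legendreI, pow_one]
      congr 1
      apply intervalIntegral.integral_congr
      intro t _
      simp [legendreP_zero, one_div]
  | 1, z, hz => by
      -- ∫ (1-t²) w² = 2 ∫ t w  via the antiderivative (1-t²) (z-t)⁻¹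
      have hderiv : ∀ t ∈ Set.uIcc (-1 : ℝ) 1, HasDerivAt
          (fun t : ℝ => (1 - t ^ 2) * (z - t)⁻¹)
          ((1 - t ^ 2) ^ 1 * ((z - t)⁻¹) ^ 2 - 2 * (t * (z - t)⁻¹)) t := by
        intro t ht
        have hzt : z - t ≠ 0 := sub_ne_zero_of_gt_one hz ht
        have hu : HasDerivAt (fun t : ℝ => 1 - t ^ 2) (-(2 * t)) t := by
          simpa using ((hasDerivAt_pow 2 t).const_sub 1)
        have hw : HasDerivAt (fun t : ℝ => (z - t)⁻¹) (((z - t)⁻¹) ^ 2) t := by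
          have hv : HasDerivAt (fun t : ℝ => z - t) (-1) t := by
            simpa using (hasDerivAt_id t).const_sub z
          have := hv.inv hzt
          refine this.congr_deriv ?_
          field_simp
        have := hu.mul hw
        refine this.congr_deriv ?_
        field_simp
        ring
      have h1 : IntervalIntegrable (fun t : ℝ => (1 - t ^ 2) ^ 1 * ((z - t)⁻¹) ^ 2)
          volume (-1) 1 := legendreI_integrand_intervalIntegrable 1 2 hz
      have h2 : IntervalIntegrable (fun t : ℝ => t * (z - t)⁻¹) volume (-1) 1 := by
        apply ContinuousOn.intervalIntegrable
        apply ContinuousOn.mul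
        · fun_prop
        · apply ContinuousOn.inv₀
          · fun_prop
          · intro t ht
            exact sub_ne_zero_of_gt_one hz ht
      have hint := intervalIntegral.integral_eq_sub_of_hasDerivAt hderiv
        (h1.sub (h2.const_mul 2))
      have hz0 : (1 : ℝ) - 1 ^ 2 = 0 := by norm_num
      have hend : ((1 : ℝ) - 1 ^ 2) * (z - 1)⁻¹ - (1 - (-1 : ℝ) ^ 2) * (z - (-1))⁻¹ = 0 := by
        norm_num
      rw [hend] at hint
      rw [intervalIntegral.integral_sub h1 (h2.const_mul 2),
        intervalIntegral.integral_const_mul] at hint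
      have hQ : legendreQ 1 z = (1 / 2) * ∫ t in (-1 : ℝ)..1, t * (z - t)⁻¹ := by
        rw [legendreQ]
        simp only [legendreP_one, div_eq_mul_inv]
      rw [hQ, legendreI]
      have : ∫ t in (-1 : ℝ)..1, (1 - t ^ 2) ^ 1 * ((z - t)⁻¹) ^ (1 + 1)
          = 2 * ∫ t in (-1 : ℝ)..1, t * (z - t)⁻¹ := by
        rw [← sub_eq_zero]
        convert hint using 2
      rw [this]
      ring
  | (l + 2), z, hz => by
      have ih1 := legendreQ_eq_legendreI (l + 1) hz
      have ih0 := legendreQ_eq_legendreI l hz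
      have hQ := legendreQ_rec l hz
      have hI := legendreI_rec l hz
      have hne : ((l : ℝ) + 2) ≠ 0 := by positivity
      have : ((l : ℝ) + 2) * legendreQ (l + 2) z
          = ((l : ℝ) + 2) * ((1 / 2) ^ (l + 2 + 1) * legendreI (l + 2) z) := by
        rw [hQ, ih1, ih0]
        have expand : ((l : ℝ) + 2) * ((1 / 2 : ℝ) ^ (l + 2 + 1) * legendreI (l + 2) z)
            = (1 / 2 : ℝ) ^ (l + 2 + 1) * (((l : ℝ) + 2) * legendreI (l + 2) z) := by ring
        rw [expand, hI]
        ring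
      exact mul_left_cancel₀ hne this

lemma legendreI_nonneg (l : ℕ) {z : ℝ} (hz : 1 < z) : 0 ≤ legendreI l z := by
  apply intervalIntegral.integral_nonneg (by norm_num : (-1 : ℝ) ≤ 1)
  intro t ht
  have h1 : 0 ≤ 1 - t ^ 2 := by nlinarith [ht.1, ht.2]
  have h2 : 0 < z - t := by nlinarith [ht.2]
  positivity

lemma legendreI_succ_le (l : ℕ) {z : ℝ} (hz : 1 < z) :
    legendreI (l + 1) z ≤ 2 * legendreI l z := by
  rw [legendreI, legendreI, ← intervalIntegral.integral_const_mul]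
  apply intervalIntegral.integral_mono_on (by norm_num : (-1 : ℝ) ≤ 1)
    (legendreI_integrand_intervalIntegrable (l + 1) (l + 2) hz)
    ((legendreI_integrand_intervalIntegrable l (l + 1) hz).const_mul 2)
  intro t ht
  have h1 : 0 ≤ 1 - t ^ 2 := by nlinarith [ht.1, ht.2]
  have h2 : 0 < z - t := by nlinarith [ht.2]
  have hw : (0 : ℝ) ≤ (z - t)⁻¹ := by positivity
  have hkey : (1 - t ^ 2) * (z - t)⁻¹ ≤ 2 := by
    rw [← div_eq_mul_inv, div_le_iff₀ h2]
    nlinarith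
  have hx : (0 : ℝ) ≤ (1 - t ^ 2) ^ l * ((z - t)⁻¹) ^ (l + 1) := by positivity
  calc (1 - t ^ 2) ^ (l + 1) * ((z - t)⁻¹) ^ (l + 1 + 1)
      = ((1 - t ^ 2) * (z - t)⁻¹) * ((1 - t ^ 2) ^ l * ((z - t)⁻¹) ^ (l + 1)) := by ring
    _ ≤ 2 * ((1 - t ^ 2) ^ l * ((z - t)⁻¹) ^ (l + 1)) := by
        exact mul_le_mul_of_nonneg_right hkey hx

lemma legendreQ_nonneg (l : ℕ) {z : ℝ} (hz : 1 < z) : 0 ≤ legendreQ l z := by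
  rw [legendreQ_eq_legendreI l hz]
  have := legendreI_nonneg l hz
  positivity

lemma legendreQ_succ_le (l : ℕ) {z : ℝ} (hz : 1 < z) :
    legendreQ (l + 1) z ≤ legendreQ l z := by
  rw [legendreQ_eq_legendreI (l + 1) hz, legendreQ_eq_legendreI l hz]
  have h := legendreI_succ_le l hz
  calc (1 / 2 : ℝ) ^ (l + 1 + 1) * legendreI (l + 1) z
      ≤ (1 / 2 : ℝ) ^ (l + 1 + 1) * (2 * legendreI l z) := by
        apply mul_le_mul_of_nonneg_left h (by positivity)
    _ = (1 / 2 : ℝ) ^ (l + 1) * legendreI l z := by ring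

lemma legendreQ_one_eq_zero (l : ℕ) : legendreQ l 1 = 0 := by
  have hnot : ¬ IntervalIntegrable (fun t => legendreP l t / (1 - t)) volume (-1) 1 := by
    apply not_intervalIntegrable_of_sub_inv_isBigO_punctured (c := (1 : ℝ))
    · apply Asymptotics.IsBigO.of_bound 2
      have hmem : {x : ℝ | 1 / 2 < legendreP l x} ∈ nhds (1 : ℝ) := by
        apply (isOpen_Ioi.preimage (legendreP_continuous l)).mem_nhds
        simp [legendreP_at_one l]
        norm_num
      filter_upwards [mem_nhdsWithin_of_mem_nhds hmem] with x hx
      have hx' : (1 : ℝ) / 2 ≤ |legendreP l x| := le_trans (le_of_lt hx) (le_abs_self _)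
      rw [Real.norm_eq_abs, Real.norm_eq_abs, abs_inv, abs_div, abs_sub_comm 1 x]
      calc |x - 1|⁻¹ = 2 * ((1 / 2) / |x - 1|) := by rw [inv_eq_one_div]; ring
        _ ≤ 2 * (|legendreP l x| / |x - 1|) := by gcongr
    · norm_num
    · rw [Set.uIcc_of_le (by norm_num : (-1 : ℝ) ≤ 1)]
      constructor <;> norm_num
  rw [legendreQ, intervalIntegral.integral_undef hnot, mul_zero]

lemma mem_uIoc_le_one {t : ℝ} (ht : t ∈ Set.uIoc (-1 : ℝ) 1) : -1 < t ∧ t ≤ 1 := by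
  rw [Set.uIoc_of_le (by norm_num : (-1 : ℝ) ≤ 1)] at ht
  exact ⟨ht.1, ht.2⟩

lemma legendreQ_continuousAt (l : ℕ) {z₀ : ℝ} (hz : 1 < z₀) :
    ContinuousAt (legendreQ l) z₀ := by
  obtain ⟨M, hM⟩ := (isCompact_Icc : IsCompact (Set.Icc (-1 : ℝ) 1)).exists_bound_of_continuousOn
    (legendreP_continuous l).continuousOn
  have hM0 : 0 ≤ M := le_trans (norm_nonneg _) (hM 0 (by norm_num))
  have hmain : ContinuousAt (fun z => ∫ t in (-1 : ℝ)..1, legendreP l t / (z - t)) z₀ := by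
    have hev : {z : ℝ | (1 + z₀) / 2 < z} ∈ nhds z₀ := by
      apply isOpen_Ioi.mem_nhds
      simp only [Set.mem_Ioi]
      linarith
    apply intervalIntegral.continuousAt_of_dominated_interval
      (bound := fun _ => M / ((z₀ - 1) / 2))
    · filter_upwards [hev] with z hz'
      apply ContinuousOn.aestronglyMeasurable _ measurableSet_uIoc
      apply ContinuousOn.div
      · exact (legendreP_continuous l).continuousOn
      · fun_prop
      · intro t ht
        have := (mem_uIoc_le_one ht).2
        have : (1 : ℝ) < z := by linarith
        nlinarith [(mem_uIoc_le_one ht).2]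
    · filter_upwards [hev] with z hz'
      apply MeasureTheory.ae_of_all
      intro t ht
      obtain ⟨ht1, ht2⟩ := mem_uIoc_le_one ht
      have hzt : (z₀ - 1) / 2 ≤ z - t := by linarith
      rw [norm_div, Real.norm_eq_abs (z - t), abs_of_pos (by linarith : (0 : ℝ) < z - t)]
      apply div_le_div₀ hM0 (hM t ⟨le_of_lt ht1, ht2⟩) (by linarith) hzt
    · exact intervalIntegrable_const
    · apply MeasureTheory.ae_of_all
      intro t ht
      obtain ⟨ht1, ht2⟩ := mem_uIoc_le_one ht
      apply ContinuousAt.div continuousAt_const (by fun_prop)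
      intro h
      nlinarith [h]
  have : legendreQ l = fun z => (1 / 2 : ℝ) * ∫ t in (-1 : ℝ)..1, legendreP l t / (z - t) := rfl
  rw [this]
  exact continuousAt_const.mul hmain

lemma legendreQ_nonneg' (l : ℕ) {z : ℝ} (hz : 1 ≤ z) : 0 ≤ legendreQ l z := by
  rcases eq_or_lt_of_le hz with h | h
  · rw [← h, legendreQ_one_eq_zero]
  · exact legendreQ_nonneg l h

/-- The Brown-Ravenhall kernel in the channel `j = m + 1/2`. -/
noncomputable def kernelB (m : ℕ) (p q : ℝ) : ℝ :=
  (1 / (2 * Real.pi)) *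
    (legendreQ m ((p / q + q / p) / 2) + legendreQ (m + 1) ((p / q + q / p) / 2))

/-- The Chandrasekhar kernel in the channel `l`. -/
noncomputable def kernelC (l : ℕ) (p q : ℝ) : ℝ :=
  (1 / Real.pi) * legendreQ l ((p / q + q / p) / 2)

lemma one_le_z {p q : ℝ} (hp : 0 < p) (hq : 0 < q) : 1 ≤ (p / q + q / p) / 2 := by
  rw [le_div_iff₀ (by norm_num : (0 : ℝ) < 2)]
  have key : p / q + q / p - 2 = (p - q) ^ 2 / (q * p) := by
    field_simp
    ring
  nlinarith [div_nonneg (sq_nonneg (p - q)) (le_of_lt (mul_pos hq hp))]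

lemma kernel_pointwise (m : ℕ) {p q : ℝ} (hp : 0 < p) (hq : 0 < q) :
    kernelB m p q ≤ kernelC m p q := by
  have hπ := Real.pi_pos
  set z := (p / q + q / p) / 2 with hzdef
  rcases eq_or_lt_of_le (one_le_z hp hq) with h | h
  · have hz1 : z = 1 := h.symm
    simp only [kernelB, kernelC, ← hzdef, hz1, legendreQ_one_eq_zero]
    norm_num
  · have hQ := legendreQ_succ_le m h
    have key : kernelC m p q - kernelB m p q
        = (legendreQ m z - legendreQ (m + 1) z) / (2 * Real.pi) := by
      simp only [kernelB, kernelC, ← hzdef]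
      field_simp
      ring
    have h2 : 0 ≤ (legendreQ m z - legendreQ (m + 1) z) / (2 * Real.pi) := by
      apply div_nonneg (by linarith) (by positivity)
    linarith [key ▸ h2]

lemma one_lt_z_of_ne {t : ℝ} (ht : 0 < t) (ht1 : t ≠ 1) : 1 < (t / 1 + 1 / t) / 2 := by
  rw [div_one, lt_div_iff₀ (by norm_num : (0 : ℝ) < 2)]
  have hne : (t - 1) ^ 2 ≠ 0 := pow_ne_zero _ (sub_ne_zero.mpr ht1)
  have hpos : 0 < (t - 1) ^ 2 := lt_of_le_of_ne (sq_nonneg _) (Ne.symm hne)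
  have key : t * (t + 1 / t - 2) = (t - 1) ^ 2 := by
    field_simp
    ring
  nlinarith

lemma one_le_z_of_pos {t : ℝ} (ht : 0 < t) : 1 ≤ (t / 1 + 1 / t) / 2 := by
  have := one_le_z ht one_pos
  simpa using this

lemma kernel_continuousOn (c : ℝ) (g : ℝ → ℝ)
    (hg : ∀ z₀ : ℝ, 1 < z₀ → ContinuousAt g z₀) :
    ContinuousOn (fun t => c * g ((t / 1 + 1 / t) / 2) / t) (Set.Ioi (0 : ℝ) \ {1}) := by
  intro t₀ ht₀
  obtain ⟨htpos, ht1⟩ := ht₀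
  rw [Set.mem_Ioi] at htpos
  rw [Set.mem_singleton_iff] at ht1
  apply ContinuousAt.continuousWithinAt
  have ht0 : t₀ ≠ 0 := ne_of_gt htpos
  have hw : ContinuousAt (fun t : ℝ => (t / 1 + 1 / t) / 2) t₀ := by
    apply ContinuousAt.div_const
    apply ContinuousAt.add
    · exact continuousAt_id.div_const 1
    · exact continuousAt_const.div continuousAt_id ht0
  have hz : (1 : ℝ) < (t₀ / 1 + 1 / t₀) / 2 := one_lt_z_of_ne htpos ht1
  have hcomp : ContinuousAt (fun t : ℝ => g ((t / 1 + 1 / t) / 2)) t₀ :=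
    ContinuousAt.comp (hg _ hz) hw
  exact ((continuousAt_const.mul hcomp).div continuousAt_id ht0)

lemma kernel_aestronglyMeasurable {f : ℝ → ℝ}
    (hf : ContinuousOn f (Set.Ioi (0 : ℝ) \ {1})) :
    AEStronglyMeasurable f (volume.restrict (Set.Ioi (0 : ℝ))) := by
  have hs : MeasurableSet (Set.Ioi (0 : ℝ) \ {1}) :=
    measurableSet_Ioi.diff (measurableSet_singleton 1)
  have haem := hf.aemeasurable (μ := volume) hs
  have hset : (Set.Ioi (0 : ℝ) \ {1} : Set ℝ) =ᵐ[volume] Set.Ioi 0 := by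
    apply MeasureTheory.diff_ae_eq_self.2
    have h1 : volume (Set.Ioi (0:ℝ) ∩ {1}) = 0 :=
      measure_mono_null Set.inter_subset_right Real.volume_singleton
    exact h1
  rw [Measure.restrict_congr_set hset] at haem
  exact haem.aestronglyMeasurable

lemma kernelB_aesm (m : ℕ) :
    AEStronglyMeasurable (fun t => kernelB m t 1 / t) (volume.restrict (Set.Ioi (0 : ℝ))) := by
  apply kernel_aestronglyMeasurable
  have h := kernel_continuousOn (1 / (2 * Real.pi))
    (fun z => legendreQ m z + legendreQ (m + 1) z)
    (fun z₀ hz₀ => (legendreQ_continuousAt m hz₀).add (legendreQ_continuousAt (m + 1) hz₀))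
  exact h

lemma kernelC_aesm (m : ℕ) :
    AEStronglyMeasurable (fun t => kernelC m t 1 / t) (volume.restrict (Set.Ioi (0 : ℝ))) := by
  apply kernel_aestronglyMeasurable
  have h := kernel_continuousOn (1 / Real.pi) (fun z => legendreQ m z)
    (fun z₀ hz₀ => legendreQ_continuousAt m hz₀)
  exact h

lemma kernelB_div_nonneg (m : ℕ) {t : ℝ} (ht : 0 < t) : 0 ≤ kernelB m t 1 / t := by
  have hz := one_le_z_of_pos ht
  have h0 := legendreQ_nonneg' m hz
  have h1 := legendreQ_nonneg' (m + 1) hz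
  have hπ := Real.pi_pos
  apply div_nonneg _ (le_of_lt ht)
  rw [kernelB]
  positivity

lemma legendreI_lower (m : ℕ) {z : ℝ} (hz1 : 1 < z) (hz2 : z ≤ 2) :
    (3 / 4 : ℝ) ^ m * (1 / 2) ^ (m + 1) * (1 / 2) ≤ legendreI m z := by
  have hsub : ∫ t in (0 : ℝ)..(1 / 2), (1 - t ^ 2) ^ m * ((z - t)⁻¹) ^ (m + 1)
      ≤ legendreI m z := by
    apply intervalIntegral.integral_mono_interval (by norm_num : (-1 : ℝ) ≤ 0)
      (by norm_num : (0 : ℝ) ≤ 1 / 2) (by norm_num : (1 / 2 : ℝ) ≤ 1)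
    · filter_upwards [MeasureTheory.ae_restrict_mem measurableSet_Ioc] with t ht
      have h1 : 0 ≤ 1 - t ^ 2 := by nlinarith [ht.1, ht.2]
      have h2 : 0 < z - t := by nlinarith [ht.2]
      positivity
    · exact legendreI_integrand_intervalIntegrable m (m + 1) hz1
  have hconst : (3 / 4 : ℝ) ^ m * (1 / 2) ^ (m + 1) * (1 / 2)
      ≤ ∫ t in (0 : ℝ)..(1 / 2), (1 - t ^ 2) ^ m * ((z - t)⁻¹) ^ (m + 1) := by
    have heq : ∫ _ in (0 : ℝ)..(1 / 2), ((3 / 4 : ℝ) ^ m * (1 / 2 : ℝ) ^ (m + 1))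
        = (3 / 4 : ℝ) ^ m * (1 / 2) ^ (m + 1) * (1 / 2) := by
      rw [intervalIntegral.integral_const]
      simp
      ring
    rw [← heq]
    apply intervalIntegral.integral_mono_on (by norm_num : (0 : ℝ) ≤ 1 / 2)
      intervalIntegrable_const
      ((legendreI_integrand_intervalIntegrable m (m + 1) hz1).mono_set
        (Set.uIcc_subset_uIcc (by norm_num [Set.uIcc_of_le] : (0 : ℝ) ∈ Set.uIcc (-1 : ℝ) 1)
          (by norm_num [Set.uIcc_of_le] : (1 / 2 : ℝ) ∈ Set.uIcc (-1 : ℝ) 1)))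
    intro t ht
    obtain ⟨ht0, ht2⟩ := ht
    have h1 : (3 / 4 : ℝ) ≤ 1 - t ^ 2 := by nlinarith
    have hzt : 0 < z - t := by linarith
    have hzt2 : z - t ≤ 2 := by linarith
    have h2 : (1 / 2 : ℝ) ≤ (z - t)⁻¹ := by
      rw [one_div]
      exact inv_anti₀ hzt hzt2
    apply mul_le_mul (pow_le_pow_left₀ (by norm_num) h1 m)
      (pow_le_pow_left₀ (by norm_num) h2 (m + 1)) (by positivity) (by positivity)
  linarith

lemma kernelB_lower (m : ℕ) {t : ℝ} (ht : t ∈ Set.Icc (2 : ℝ) 3) :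
    (1 / (2 * Real.pi)) * ((1 / 2) ^ (m + 1) * ((3 / 4 : ℝ) ^ m * (1 / 2) ^ (m + 1) * (1 / 2))) / 3
      ≤ kernelB m t 1 / t := by
  obtain ⟨ht2, ht3⟩ := ht
  have htpos : (0 : ℝ) < t := by linarith
  have hπ := Real.pi_pos
  set z := (t / 1 + 1 / t) / 2 with hzdef
  have hz1 : 1 < z := one_lt_z_of_ne htpos (by intro h; rw [h] at ht2; norm_num at ht2)
  have hinv : 1 / t ≤ 1 / 2 := by
    apply one_div_le_one_div_of_le (by norm_num) ht2
  have hz2 : z ≤ 2 := by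
    rw [hzdef, div_one]
    nlinarith
  have hI := legendreI_lower m hz1 hz2
  have hQ : (1 / 2 : ℝ) ^ (m + 1) * ((3 / 4 : ℝ) ^ m * (1 / 2) ^ (m + 1) * (1 / 2))
      ≤ legendreQ m z := by
    rw [legendreQ_eq_legendreI m hz1]
    apply mul_le_mul_of_nonneg_left hI (by positivity)
  have hQ1 : 0 ≤ legendreQ (m + 1) z := legendreQ_nonneg (m + 1) hz1
  have hkB : (1 / (2 * Real.pi)) * ((1 / 2) ^ (m + 1) * ((3 / 4 : ℝ) ^ m * (1 / 2) ^ (m + 1) * (1 / 2)))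
      ≤ kernelB m t 1 := by
    rw [kernelB, ← hzdef]
    have : legendreQ m z ≤ legendreQ m z + legendreQ (m + 1) z := by linarith
    apply mul_le_mul_of_nonneg_left (by linarith) (by positivity)
  have hB0 : 0 ≤ kernelB m t 1 := le_trans (by positivity) hkB
  exact div_le_div₀ hB0 hkB htpos ht3

/-- Pointwise, `k_j^B ≤ k_{j-1/2}^C` (with `j = m + 1/2`, `l = m`), and consequently
the critical coupling constants satisfy `κ_j^B ≥ κ_{j-1/2}^C`. -/
theorem kernelB_le_kernelC (m : ℕ) :
    (∀ p q : ℝ, 0 < p → 0 < q → kernelB m p q ≤ kernelC m p q) ∧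
    (∫ t in Set.Ioi (0 : ℝ), kernelC m t 1 / t)⁻¹
      ≤ (∫ t in Set.Ioi (0 : ℝ), kernelB m t 1 / t)⁻¹ := by
  constructor
  · intro p q hp hq
    exact kernel_pointwise m hp hq
  · have hf0 : ∀ t ∈ Set.Ioi (0 : ℝ), 0 ≤ kernelB m t 1 / t :=
      fun t ht => kernelB_div_nonneg m (Set.mem_Ioi.1 ht)
    have hfg : ∀ t ∈ Set.Ioi (0 : ℝ), kernelB m t 1 / t ≤ kernelC m t 1 / t := by
      intro t ht
      exact (div_le_div_iff_of_pos_right (Set.mem_Ioi.1 ht)).2 (kernel_pointwise m (Set.mem_Ioi.1 ht) one_pos)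
    by_cases hC : IntegrableOn (fun t => kernelC m t 1 / t) (Set.Ioi (0 : ℝ)) volume
    · have hB : IntegrableOn (fun t => kernelB m t 1 / t) (Set.Ioi (0 : ℝ)) volume := by
        apply hC.mono' (kernelB_aesm m)
        rw [MeasureTheory.ae_restrict_iff' measurableSet_Ioi]
        apply MeasureTheory.ae_of_all
        intro t ht
        rw [Real.norm_eq_abs, abs_of_nonneg (hf0 t ht)]
        exact hfg t ht
      have hle : (∫ t in Set.Ioi (0 : ℝ), kernelB m t 1 / t)
          ≤ ∫ t in Set.Ioi (0 : ℝ), kernelC m t 1 / t :=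
        setIntegral_mono_on hB hC measurableSet_Ioi hfg
      have hpos : 0 < ∫ t in Set.Ioi (0 : ℝ), kernelB m t 1 / t := by
        set c : ℝ := (1 / (2 * Real.pi)) *
          ((1 / 2) ^ (m + 1) * ((3 / 4 : ℝ) ^ m * (1 / 2) ^ (m + 1) * (1 / 2))) / 3 with hc
        have hcpos : 0 < c := by
          rw [hc]
          have hπ := Real.pi_pos
          positivity
        have hIccsub : Set.Icc (2 : ℝ) 3 ⊆ Set.Ioi (0 : ℝ) := by
          intro x hx
          exact lt_of_lt_of_le two_pos hx.1
        have hIcc : IntegrableOn (fun t => kernelB m t 1 / t) (Set.Icc (2 : ℝ) 3) volume :=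
          hB.mono_set hIccsub
        have hconst : c ≤ ∫ t in Set.Icc (2 : ℝ) 3, kernelB m t 1 / t := by
          have h1 : ∫ _ in Set.Icc (2 : ℝ) 3, c = c := by
            rw [setIntegral_const]
            rw [Real.volume_real_Icc]
            norm_num
          rw [← h1]
          apply setIntegral_mono_on
            (MeasureTheory.integrableOn_const measure_Icc_lt_top.ne) hIcc
            measurableSet_Icc
          intro t ht
          exact kernelB_lower m ht
        have hsub : (∫ t in Set.Icc (2 : ℝ) 3, kernelB m t 1 / t)
            ≤ ∫ t in Set.Ioi (0 : ℝ), kernelB m t 1 / t := by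
          apply setIntegral_mono_set hB
          · filter_upwards [MeasureTheory.ae_restrict_mem measurableSet_Ioi] with t ht
            exact hf0 t ht
          · exact hIccsub.eventuallyLE
        linarith
      exact inv_anti₀ hpos hle
    · have hgzero : (∫ t in Set.Ioi (0 : ℝ), kernelC m t 1 / t) = 0 :=
        MeasureTheory.integral_undef hC
      rw [hgzero, inv_zero]
      apply inv_nonneg.2
      exact setIntegral_nonneg measurableSet_Ioi hf0
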